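/- Let 𝔟 be a finite-dimensional complex Lie algebra and 0 → E₁ → E₂ → E₃ → 0 a short exact sequence of finite-dimensional 𝔟-modules on which a Cartan-type abelian subalgebra 𝔱 ⊆ 𝔟 acts semisimply. If E₁ has no 𝔱-weight equal to 0 and no 𝔱-weight equal to a weight of the nilpotent radical 𝔟⁺ = [𝔟,𝔟] acting on 𝔟 (i.e., no weight of E₁ lies in Δ_𝔟⁺ ∪ {0}), then the induced map on invariants E₂^𝔟 → E₃^𝔟 is an isomorphism. -/

import Mathlib

section Aux

/-- From an independent family of submodules, a finitely supported family of members
summing to zero is identically zero. -/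
lemma aux_indep_eq_zero {ι N : Type*} [AddCommGroup N] [Module ℂ N]
    {p : ι → Submodule ℂ N} (hp : iSupIndep p) (c : ι →₀ N)
    (hc : ∀ i, c i ∈ p i) (h : c.sum (fun _ v => v) = 0) (i : ι) : c i = 0 := by
  classical
  have h1 : c i + (c.erase i).sum (fun _ v => v) = 0 :=
    (Finsupp.add_sum_erase' c i (fun _ v => v) (fun _ => rfl)).trans h
  have h2 : (c.erase i).sum (fun _ v => v) ∈ ⨆ j ≠ i, p j := by
    apply Submodule.sum_mem
    intro j hj
    have hji : j ≠ i := by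
      rintro rfl
      simp [Finsupp.erase_same] at hj
    rw [Finsupp.erase_ne hji]
    exact Submodule.mem_iSup_of_mem j (Submodule.mem_iSup_of_mem hji (hc j))
  have h3 : c i ∈ ⨆ j ≠ i, p j := by
    have heq : c i = -((c.erase i).sum (fun _ v => v)) :=
      eq_neg_of_add_eq_zero_left h1
    rw [heq]; exact Submodule.neg_mem _ h2
  exact (Submodule.mem_bot ℂ).mp ((hp i).le_bot ⟨hc i, h3⟩)

variable {𝔟 : Type*} [LieRing 𝔟] [LieAlgebra ℂ 𝔟] (𝔱 : LieSubalgebra ℂ 𝔟)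
variable (M : Type*) [AddCommGroup M] [Module ℂ M] [LieRingModule 𝔟 M] [LieModule ℂ 𝔟 M]

/-- The `χ`-weight space of the `𝔱`-action on `M` (honest eigenvectors). -/
def auxWtSub (χ : 𝔱 → ℂ) : Submodule ℂ M where
  carrier := {v : M | ∀ h : 𝔱, ⁅(h : 𝔟), v⁆ = χ h • v}
  add_mem' := by
    intro a b ha hb h
    rw [lie_add, ha h, hb h, smul_add]
  zero_mem' := by intro h; rw [lie_zero, smul_zero]
  smul_mem' := by
    intro t a ha h
    rw [lie_smul, ha h, smul_comm]

lemma mem_auxWtSub {χ : 𝔱 → ℂ} {v : M} :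
    v ∈ auxWtSub 𝔱 M χ ↔ ∀ h : 𝔱, ⁅(h : 𝔟), v⁆ = χ h • v := Iff.rfl

lemma auxWtSub_le_genWeightSpace [IsLieAbelian 𝔱] (χ : 𝔱 → ℂ) :
    auxWtSub 𝔱 M χ ≤ (LieModule.genWeightSpace M χ : LieSubmodule ℂ 𝔱 M).toSubmodule := by
  intro v hv
  rw [LieSubmodule.mem_toSubmodule, LieModule.mem_genWeightSpace]
  intro x
  refine ⟨1, ?_⟩
  have : LieModule.toEnd ℂ 𝔱 M x v = ⁅(x : 𝔟), v⁆ := by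
    rw [LieModule.toEnd_apply_apply, LieSubalgebra.coe_bracket_of_module]
  simp [this, hv x]

lemma auxWtSub_indep [IsLieAbelian 𝔱] : iSupIndep (auxWtSub 𝔱 M) := by
  have h := (LieSubmodule.iSupIndep_toSubmodule).mpr
    (LieModule.iSupIndep_genWeightSpace ℂ 𝔱 M)
  exact h.mono (auxWtSub_le_genWeightSpace 𝔱 M)

lemma auxWtSub_iSup_eq_top [IsLieAbelian 𝔱]
    (hss : Submodule.span ℂ {v : M | ∃ χ : 𝔱 → ℂ, ∀ h : 𝔱, ⁅(h : 𝔟), v⁆ = χ h • v} = ⊤) :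
    (⨆ χ : 𝔱 → ℂ, auxWtSub 𝔱 M χ) = ⊤ := by
  rw [eq_top_iff, ← hss]
  apply Submodule.span_le.mpr
  rintro v ⟨χ, hv⟩
  exact Submodule.mem_iSup_of_mem χ hv

end Aux

/-- Let `𝔟 = 𝔱 ⊕ 𝔟⁺` be a finite-dimensional solvable complex Lie algebra
with `𝔱` abelian acting semisimply and `𝔟⁺ = [𝔟,𝔟]` spanned by `𝔱`-weight vectors with
weights in a set `Δ` not containing `0`.  If `0 → E₁ → E₂ → E₃ → 0` is a short exact
sequence of finite-dimensional `𝔟`-modules (with `𝔱` acting semisimply) and no `𝔱`-weight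
of `E₁` lies in `Δ ∪ {0}`, then the induced map on `𝔟`-invariants `E₂^𝔟 → E₃^𝔟` is an
isomorphism (a bijection between the invariant subspaces). -/
theorem invariants_iso_of_no_low_weights
    {𝔟 : Type*} [LieRing 𝔟] [LieAlgebra ℂ 𝔟] [FiniteDimensional ℂ 𝔟]
    [LieAlgebra.IsSolvable 𝔟]
    {E₁ E₂ E₃ : Type*}
    [AddCommGroup E₁] [Module ℂ E₁] [LieRingModule 𝔟 E₁] [LieModule ℂ 𝔟 E₁]
    [FiniteDimensional ℂ E₁]
    [AddCommGroup E₂] [Module ℂ E₂] [LieRingModule 𝔟 E₂] [LieModule ℂ 𝔟 E₂]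
    [FiniteDimensional ℂ E₂]
    [AddCommGroup E₃] [Module ℂ E₃] [LieRingModule 𝔟 E₃] [LieModule ℂ 𝔟 E₃]
    [FiniteDimensional ℂ E₃]
    (f : E₁ →ₗ⁅ℂ,𝔟⁆ E₂) (g : E₂ →ₗ⁅ℂ,𝔟⁆ E₃)
    (hf : Function.Injective f) (hg : Function.Surjective g)
    (hexact : ∀ v : E₂, g v = 0 ↔ ∃ u : E₁, f u = v)
    -- the abelian subalgebra 𝔱, complementary to 𝔟⁺ = [𝔟,𝔟]
    (𝔱 : LieSubalgebra ℂ 𝔟) [IsLieAbelian 𝔱]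
    (hcompl : IsCompl 𝔱.toSubmodule (LieAlgebra.derivedSeries ℂ 𝔟 1).toSubmodule)
    -- the 𝔱-weights of 𝔟⁺, a set Δ of weights not containing 0
    (Δ : Set (𝔱 → ℂ)) (h0 : (0 : 𝔱 → ℂ) ∉ Δ)
    (hΔ : (LieAlgebra.derivedSeries ℂ 𝔟 1).toSubmodule ≤
      Submodule.span ℂ {x : 𝔟 | ∃ χ ∈ Δ, ∀ h : 𝔱, ⁅(h : 𝔟), x⁆ = χ h • x})
    -- 𝔱 acts semisimply on the modules considered
    (hss₁ : Submodule.span ℂ {v : E₁ | ∃ χ : 𝔱 → ℂ, ∀ h : 𝔱, ⁅(h : 𝔟), v⁆ = χ h • v} = ⊤)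
    (hss₂ : Submodule.span ℂ {v : E₂ | ∃ χ : 𝔱 → ℂ, ∀ h : 𝔱, ⁅(h : 𝔟), v⁆ = χ h • v} = ⊤)
    (hss₃ : Submodule.span ℂ {v : E₃ | ∃ χ : 𝔱 → ℂ, ∀ h : 𝔱, ⁅(h : 𝔟), v⁆ = χ h • v} = ⊤)
    -- no 𝔱-weight of E₁ lies in Δ ∪ {0}
    (hwt : ∀ χ : 𝔱 → ℂ, (∃ v : E₁, v ≠ 0 ∧ ∀ h : 𝔱, ⁅(h : 𝔟), v⁆ = χ h • v) →
      χ ∉ Δ ∧ χ ≠ 0) :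
    Set.BijOn g {v : E₂ | ∀ x : 𝔟, ⁅x, v⁆ = 0} {v : E₃ | ∀ x : 𝔟, ⁅x, v⁆ = 0} := by
  classical
  -- E₁ has no nonzero vector killed by 𝔱 together with a weight in Δ ∪ {0}.
  have hE₁ : ∀ (χ : 𝔱 → ℂ), χ ∈ Δ ∪ {0} → ∀ u : E₁,
      (∀ h : 𝔱, ⁅(h : 𝔟), u⁆ = χ h • u) → u = 0 := by
    intro χ hχ u hu
    by_contra hne
    obtain ⟨h1, h2⟩ := hwt χ ⟨u, hne, hu⟩
    rcases hχ with hχ | hχ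
    · exact h1 hχ
    · exact h2 hχ
  refine ⟨?_, ?_, ?_⟩
  · -- MapsTo
    intro v hv x
    have : g ⁅x, v⁆ = ⁅x, g v⁆ := g.map_lie x v
    rw [← this, hv x, map_zero g]
  · -- InjOn
    intro a ha b hb hab
    have hz : g (a - b) = 0 := by rw [map_sub g, hab, sub_self]
    obtain ⟨u, hu⟩ := (hexact (a - b)).mp hz
    have hu0 : u = 0 := by
      apply hE₁ 0 (Or.inr rfl) u
      intro h
      apply hf
      rw [f.map_lie, hu, lie_sub, ha (h : 𝔟), hb (h : 𝔟), sub_self,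
        Pi.zero_apply, zero_smul, map_zero f]
    rw [hu0, map_zero f] at hu
    exact sub_eq_zero.mp hu.symm
  · -- SurjOn
    intro w hw
    obtain ⟨v, hv⟩ := hg w
    -- decompose v into 𝔱-weight vectors
    have hvtop : v ∈ ⨆ χ : 𝔱 → ℂ, auxWtSub 𝔱 E₂ χ := by
      rw [auxWtSub_iSup_eq_top 𝔱 E₂ hss₂]; trivial
    obtain ⟨c, hc, hcsum⟩ := (Submodule.mem_iSup_iff_exists_finsupp _ v).mp hvtop
    -- push the decomposition to E₃ and subtract w
    set d : (𝔱 → ℂ) →₀ E₃ :=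
      Finsupp.mapRange g g.map_zero c - Finsupp.single 0 w with hd
    have hdmem : ∀ χ, d χ ∈ auxWtSub 𝔱 E₃ χ := by
      intro χ
      have h1 : g (c χ) ∈ auxWtSub 𝔱 E₃ χ := by
        intro h
        rw [← g.map_lie, hc χ h, map_smul g]
      have h2 : (Finsupp.single (0 : 𝔱 → ℂ) w) χ ∈ auxWtSub 𝔱 E₃ χ := by
        by_cases hχ : χ = 0
        · subst hχ
          rw [Finsupp.single_eq_same]
          intro h
          rw [hw (h : 𝔟), Pi.zero_apply, zero_smul]
        · rw [Finsupp.single_eq_of_ne hχ]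
          exact (auxWtSub 𝔱 E₃ χ).zero_mem
      have : d χ = g (c χ) - (Finsupp.single (0 : 𝔱 → ℂ) w) χ := by
        rw [hd, Finsupp.sub_apply, Finsupp.mapRange_apply]
      rw [this]
      exact Submodule.sub_mem _ h1 h2
    have hdsum : d.sum (fun _ v => v) = 0 := by
      rw [hd, Finsupp.sum_sub_index (fun _ _ _ => rfl)]
      rw [Finsupp.sum_mapRange_index (fun _ => rfl)]
      rw [Finsupp.sum_single_index rfl]
      have hmap : g (c.sum fun _ u => u) = c.sum (fun _ u => g u) := by
        have := map_finsuppSum g.toLinearMap c (fun _ u => u)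
        simpa using this
      rw [← hmap, hcsum, hv, sub_self]
    have hdzero : ∀ χ, d χ = 0 :=
      aux_indep_eq_zero (auxWtSub_indep 𝔱 E₃) d hdmem hdsum
    -- v₀ := weight-0 component of v is an invariant lift of w
    set v₀ : E₂ := c 0 with hv₀
    have hgv₀ : g v₀ = w := by
      have := hdzero 0
      rw [hd, Finsupp.sub_apply, Finsupp.mapRange_apply, Finsupp.single_eq_same,
        sub_eq_zero] at this
      exact this
    have hv₀wt : ∀ h : 𝔱, ⁅(h : 𝔟), v₀⁆ = 0 := by
      intro h
      have := hc 0 h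
      rwa [Pi.zero_apply, zero_smul] at this
    -- v₀ is annihilated by all of 𝔟
    have hinv : ∀ x : 𝔟, ⁅x, v₀⁆ = 0 := by
      let P : Submodule ℂ 𝔟 :=
        { carrier := {x : 𝔟 | ⁅x, v₀⁆ = 0}
          add_mem' := by
            intro a b ha hb
            show ⁅a + b, v₀⁆ = 0
            rw [add_lie, ha, hb, add_zero]
          zero_mem' := zero_lie v₀
          smul_mem' := by
            intro t a ha
            show ⁅t • a, v₀⁆ = 0
            rw [smul_lie, ha, smul_zero] }
      have hP : ⊤ ≤ P := by
        rw [← hcompl.sup_eq_top]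
        apply sup_le
        · intro x hx
          exact hv₀wt ⟨x, hx⟩
        · refine le_trans hΔ (Submodule.span_le.mpr ?_)
          rintro x ⟨χ, hχΔ, hx⟩
          show ⁅x, v₀⁆ = 0
          set z : E₂ := ⁅x, v₀⁆ with hz
          have hzwt : ∀ h : 𝔱, ⁅(h : 𝔟), z⁆ = χ h • z := by
            intro h
            rw [hz, leibniz_lie, hv₀wt h, lie_zero, add_zero, hx h, smul_lie]
          have hgz : g z = 0 := by
            show g ⁅x, v₀⁆ = 0
            rw [g.map_lie, hgv₀, hw x]
          obtain ⟨u, hu⟩ := (hexact z).mp hgz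
          have huwt : ∀ h : 𝔱, ⁅(h : 𝔟), u⁆ = χ h • u := by
            intro h
            apply hf
            rw [f.map_lie, hu, hzwt h, map_smul f, hu]
          have : u = 0 := hE₁ χ (Or.inl hχΔ) u huwt
          rw [this, map_zero f] at hu
          exact hu.symm
      intro x
      exact hP trivial
    exact ⟨v₀, hinv, hgv₀⟩
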